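/- Suppose R₀ = (Λλ/(μσ))·φ'(0) ≤ 1, where φ is differentiable on [0,∞) with φ(0) = 0 and 0 < v·φ'(v) ≤ φ(v) for every v > 0. Then the system Λ - μu - λuφ(v) = 0, λuφ(v) - σv = 0 has no solution (u,v) with v > 0; equivalently, h(v) = (Λλ/(μσ))·(φ(v)/v) - (λ/μ)·φ(v) - 1 < 0 for every v > 0, so the disease-free equilibrium E₀ = (Λ/μ, 0) is the only steady state. -/

import Mathlib

lemma slope_le_deriv_zero (φ : ℝ → ℝ)
    (hdiff : ∀ v ∈ Set.Ici (0:ℝ), DifferentiableAt ℝ φ v)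
    (hφ0 : φ 0 = 0)
    (hinc : ∀ v : ℝ, 0 < v → 0 < v * deriv φ v ∧ v * deriv φ v ≤ φ v)
    {v : ℝ} (hv : 0 < v) : φ v / v ≤ deriv φ 0 := by
  have hgdiff : ∀ t ∈ Set.Ioi (0:ℝ), DifferentiableAt ℝ (fun t => φ t / t) t := fun t ht =>
    ((hdiff t (Set.mem_Ici.mpr (le_of_lt ht))).div differentiableAt_fun_id (ne_of_gt ht))
  have hant : AntitoneOn (fun t => φ t / t) (Set.Ioi 0) := by
    apply antitoneOn_of_deriv_nonpos (convex_Ioi 0)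
    · exact fun t ht => (hgdiff t ht).continuousAt.continuousWithinAt
    · rw [interior_Ioi]
      exact fun t ht => (hgdiff t ht).differentiableWithinAt
    · rw [interior_Ioi]
      intro t ht
      have ht' : (0:ℝ) < t := ht
      have hd := deriv_fun_div (hdiff t (Set.mem_Ici.mpr ht'.le)) differentiableAt_fun_id
        (ne_of_gt ht')
      simp only [deriv_id''] at hd
      rw [hd]
      have h2 := (hinc t ht').2
      have : deriv φ t * t - φ t * 1 ≤ 0 := by nlinarith
      exact div_nonpos_of_nonpos_of_nonneg this (sq_nonneg t)
  have hder : HasDerivAt φ (deriv φ 0) 0 :=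
    (hdiff 0 (Set.mem_Ici.mpr le_rfl)).hasDerivAt
  have hslope : Filter.Tendsto (slope φ 0) (nhdsWithin 0 {(0:ℝ)}ᶜ) (nhds (deriv φ 0)) :=
    hasDerivAt_iff_tendsto_slope.mp hder
  have hslope' : Filter.Tendsto (slope φ 0) (nhdsWithin 0 (Set.Ioi 0)) (nhds (deriv φ 0)) :=
    hslope.mono_left (nhdsWithin_mono _ (fun x hx => ne_of_gt hx))
  refine ge_of_tendsto hslope' ?_
  filter_upwards [self_mem_nhdsWithin,
    Icc_mem_nhdsGT_of_mem (⟨le_rfl, hv⟩ : (0:ℝ) ∈ Set.Ico 0 v)] with t ht htv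
  have ht' : (0:ℝ) < t := ht
  have := hant ht' (Set.mem_Ioi.mpr hv) htv.2
  simpa [slope_def_field, hφ0] using this

theorem stmt_7 (φ : ℝ → ℝ) (Λ μ σ lam : ℝ)
    (hΛ : 0 < Λ) (hμ : 0 < μ) (hσ : 0 < σ) (hlam : 0 < lam)
    (hdiff : ∀ v ∈ Set.Ici (0:ℝ), DifferentiableAt ℝ φ v)
    (hφ0 : φ 0 = 0)
    (hinc : ∀ v : ℝ, 0 < v → 0 < v * deriv φ v ∧ v * deriv φ v ≤ φ v)
    (hR0 : Λ * lam / (μ * σ) * deriv φ 0 ≤ 1) :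
    (∀ v : ℝ, 0 < v → Λ * lam / (μ * σ) * (φ v / v) - lam / μ * φ v - 1 < 0) ∧
    (∀ u v : ℝ, 0 < v →
      ¬ (Λ - μ * u - lam * u * φ v = 0 ∧ lam * u * φ v - σ * v = 0)) := by
  have key : ∀ v : ℝ, 0 < v → Λ * lam / (μ * σ) * (φ v / v) - lam / μ * φ v - 1 < 0 := by
    intro v hv
    have hs := slope_le_deriv_zero φ hdiff hφ0 hinc hv
    have hφpos : 0 < φ v := lt_of_lt_of_le (hinc v hv).1 (hinc v hv).2
    have hc : 0 < Λ * lam / (μ * σ) := by positivity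
    have h1 : Λ * lam / (μ * σ) * (φ v / v) ≤ Λ * lam / (μ * σ) * deriv φ 0 :=
      mul_le_mul_of_nonneg_left hs hc.le
    have h2 : 0 < lam / μ * φ v := by positivity
    linarith
  refine ⟨key, ?_⟩
  rintro u v hv ⟨h1, h2⟩
  have hk := key v hv
  have hφpos : 0 < φ v := lt_of_lt_of_le (hinc v hv).1 (hinc v hv).2
  have hpos : (0:ℝ) < μ * σ * v := by positivity
  have hrw : Λ * lam / (μ * σ) * (φ v / v) = Λ * lam * φ v / (μ * σ * v) := by
    field_simp
  rw [hrw] at hk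
  have hk2 : Λ * lam * φ v / (μ * σ * v) < lam / μ * φ v + 1 := by linarith
  have key2 : Λ * lam * φ v < (lam / μ * φ v + 1) * (μ * σ * v) :=
    (div_lt_iff₀ hpos).mp hk2
  have key3 : Λ * lam * φ v < lam * φ v * (σ * v) + μ * σ * v := by
    have : (lam / μ * φ v + 1) * (μ * σ * v) = lam * φ v * (σ * v) + μ * σ * v := by
      field_simp
    linarith [this ▸ key2]
  have e1 : lam * u * φ v = σ * v := by linarith
  have e2 : Λ = μ * u + lam * u * φ v := by linarith
  have e3 : Λ * (lam * φ v) = μ * (lam * u * φ v) + (lam * u * φ v) * (lam * φ v) := by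
    rw [e2]; ring
  rw [e1] at e3
  nlinarith [e3, key3]
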